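/- Let d ≥ 1 and let μ and Q be nonatomic Borel probability measures on ℝ^d. Then for every x ∈ ℝ^d there exists a unit vector u ∈ ℝ^d such that the closed halfspace H = H_{u,x}, whose boundary hyperplane contains x, satisfies Q(H) = 0 or Q(H) ≤ μ(H); equivalently, Q(H)/μ(H) ≤ 1 under the conventions 0/0 = 0 and a/0 = +∞ for a > 0. In particular the point curve depth satisfies D(x|Q,μ) ≤ 1 for every x. (Lemma S3.1 / 'depth bounded' lemma of the paper.) -/

import Mathlib

open MeasureTheory Set Filter
open scoped ENNReal RealInnerProductSpace

noncomputable section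

abbrev Euc (d : ℕ) := EuclideanSpace ℝ (Fin d)

def halfSpace {d : ℕ} (u x : Euc d) : Set (Euc d) := {y | ⟪x, u⟫ ≤ ⟪y, u⟫}

/-- Point curve depth `D(x | Q, μ)`, with the `ℝ≥0∞` division conventions
`a / 0 = ∞` for `a > 0` and `0 / 0 = 0`. -/
def pointDepth {d : ℕ} (Q μ : Measure (Euc d)) (x : Euc d) : ℝ≥0∞ :=
  ⨅ (u : Euc d) (_ : ‖u‖ = 1), Q (halfSpace u x) / μ (halfSpace u x)

lemma measurableSet_halfSpace {d : ℕ} (u x : Euc d) : MeasurableSet (halfSpace u x) := by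
  have h : Continuous fun y : Euc d => ⟪y, u⟫ := continuous_id.inner continuous_const
  exact (isClosed_le continuous_const h).measurableSet

lemma measurableSet_flat {d : ℕ} (x : Euc d) (V : Submodule ℝ (Euc d)) :
    MeasurableSet {y : Euc d | y - x ∈ V} := by
  have hc : IsClosed (V : Set (Euc d)) := V.closed_of_finiteDimensional
  have : {y : Euc d | y - x ∈ V} = (fun y : Euc d => y - x) ⁻¹' (V : Set (Euc d)) := rfl
  rw [this]
  exact (hc.preimage (continuous_id.sub continuous_const)).measurableSet

/-- For every `j < d` there is a `j`-dimensional flat through `x` of `ρ`-measure zero. -/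
lemma exists_null_flat {d : ℕ} (ρ : Measure (Euc d)) [IsFiniteMeasure ρ]
    (x : Euc d) (hx : ρ {x} = 0) :
    ∀ j : ℕ, j < d → ∃ V : Submodule ℝ (Euc d), Module.finrank ℝ V = j ∧
      ρ {y | y - x ∈ V} = 0 := by
  intro j
  induction j with
  | zero =>
    intro _
    refine ⟨⊥, by simp, ?_⟩
    have h : {y : Euc d | y - x ∈ (⊥ : Submodule ℝ (Euc d))} = {x} := by
      ext y; simp [sub_eq_zero]
    rw [h]; exact hx
  | succ j ih =>
    intro hj
    obtain ⟨V, hVr, hVnull⟩ := ih (Nat.lt_of_succ_lt hj)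
    have hrE : Module.finrank ℝ (Euc d) = d := finrank_euclideanSpace_fin
    have horth : 2 ≤ Module.finrank ℝ Vᗮ := by
      have := V.finrank_add_finrank_orthogonal
      omega
    set b := stdOrthonormalBasis ℝ (Vᗮ : Submodule ℝ (Euc d))
    set w : Euc d := ↑(b ⟨0, by omega⟩)
    set w' : Euc d := ↑(b ⟨1, by omega⟩)
    have hwV : w ∈ Vᗮ := (b ⟨0, by omega⟩).2
    have hw'V : w' ∈ Vᗮ := (b ⟨1, by omega⟩).2
    have hnw : ‖w‖ = 1 := (Submodule.norm_coe _).trans (b.orthonormal.1 ⟨0, by omega⟩)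
    have hnw' : ‖w'‖ = 1 := (Submodule.norm_coe _).trans (b.orthonormal.1 ⟨1, by omega⟩)
    have hww : ⟪w, w⟫ = 1 := by
      rw [real_inner_self_eq_norm_sq, hnw]; norm_num
    have hw'w : ⟪w', w⟫ = 0 := by
      have := b.orthonormal.2 (i := ⟨1, by omega⟩) (j := ⟨0, by omega⟩) (by simp)
      exact this
    have hww' : ⟪w, w'⟫ = 0 := by rw [real_inner_comm]; exact hw'w
    have hw'w' : ⟪w', w'⟫ = 1 := by
      rw [real_inner_self_eq_norm_sq, hnw']; norm_num
    have hVw : ∀ v ∈ V, ⟪v, w⟫ = 0 := fun v hv => (Submodule.mem_orthogonal V w).mp hwV v hv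
    have hVw' : ∀ v ∈ V, ⟪v, w'⟫ = 0 := fun v hv => (Submodule.mem_orthogonal V w').mp hw'V v hv
    -- family of extensions
    set z : ℝ → Euc d := fun t => w + t • w'
    set W : ℝ → Submodule ℝ (Euc d) := fun t => V ⊔ Submodule.span ℝ {z t}
    -- inner products of decomposed vectors
    have hzw : ∀ t : ℝ, ⟪z t, w⟫ = 1 := by
      intro t
      show ⟪w + t • w', w⟫ = 1
      rw [inner_add_left, real_inner_smul_left, hww, hw'w]; ring
    have hzw' : ∀ t : ℝ, ⟪z t, w'⟫ = t := by
      intro t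
      show ⟪w + t • w', w'⟫ = t
      rw [inner_add_left, real_inner_smul_left, hww', hw'w']; ring
    have key : ∀ (v : Euc d), v ∈ V → ∀ a t : ℝ,
        ⟪v + a • z t, w⟫ = a ∧ ⟪v + a • z t, w'⟫ = a * t := by
      intro v hv a t
      constructor
      · rw [inner_add_left, real_inner_smul_left, hVw v hv, hzw]; ring
      · rw [inner_add_left, real_inner_smul_left, hVw' v hv, hzw']; ring
    have decomp : ∀ t (y : Euc d), y ∈ W t → ∃ v ∈ V, ∃ a : ℝ, y = v + a • z t := by
      intro t y hy
      obtain ⟨v, hv, p, hp, rfl⟩ := Submodule.mem_sup.mp hy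
      obtain ⟨a, rfl⟩ := Submodule.mem_span_singleton.mp hp
      exact ⟨v, hv, a, rfl⟩
    set A : ℝ → Set (Euc d) := fun t => {y | y - x ∈ W t} \ {y | y - x ∈ V}
    have hAmeas : ∀ t, MeasurableSet (A t) :=
      fun t => (measurableSet_flat x (W t)).diff (measurableSet_flat x V)
    have hAdisj : Pairwise (Function.onFun Disjoint A) := by
      intro s t hst
      rw [Function.onFun, Set.disjoint_left]
      rintro y ⟨hys, hyV⟩ ⟨hyt, -⟩
      obtain ⟨v, hv, a, hva⟩ := decomp s _ hys
      obtain ⟨v', hv', a', hva'⟩ := decomp t _ hyt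
      have e1 := key v hv a s
      have e2 := key v' hv' a' t
      rw [← hva] at e1
      rw [← hva'] at e2
      have haa : a = a' := by rw [← e1.1, e2.1]
      have hast : a * s = a' * t := by rw [← e1.2, e2.2]
      have ha0 : a = 0 := by
        have h4 : a * s = a * t := hast.trans (by rw [haa])
        have h3 : a * (s - t) = 0 := by rw [mul_sub, h4, sub_self]
        exact (mul_eq_zero.mp h3).resolve_right (sub_ne_zero.mpr hst)
      apply hyV
      show y - x ∈ V
      rw [hva, ha0, zero_smul, add_zero]
      exact hv
    have hcnt : Set.Countable {t : ℝ | 0 < ρ (A t)} :=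
      Measure.countable_meas_pos_of_disjoint_iUnion hAmeas hAdisj
    obtain ⟨t₀, ht₀⟩ : ∃ t : ℝ, t ∉ {t : ℝ | 0 < ρ (A t)} := by
      by_contra h
      push_neg at h
      exact Set.not_countable_univ (hcnt.mono (fun t _ => h t))
    have hA0 : ρ (A t₀) = 0 := by
      simpa using (not_lt.mp ht₀ : ρ (A t₀) ≤ 0)
    refine ⟨W t₀, ?_, ?_⟩
    · -- rank
      have hz0 : z t₀ ≠ 0 := by
        intro h
        have h1 := hzw t₀
        rw [h, inner_zero_left] at h1
        exact one_ne_zero h1.symm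
      have hzV : z t₀ ∉ V := by
        intro h
        have h1 := hVw _ h
        rw [hzw t₀] at h1
        exact one_ne_zero h1
      have hdisj : V ⊓ Submodule.span ℝ {z t₀} = ⊥ := by
        rw [eq_bot_iff]
        rintro p ⟨hpV, hpS⟩
        obtain ⟨a, rfl⟩ := Submodule.mem_span_singleton.mp hpS
        rcases eq_or_ne a 0 with rfl | ha
        · simp
        · exact absurd ((V.smul_mem_iff ha).mp hpV) hzV
      have := Submodule.finrank_sup_add_finrank_inf_eq V (Submodule.span ℝ {z t₀})
      rw [hdisj, finrank_span_singleton hz0, hVr] at this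
      simpa using this
    · -- null
      have hsub : {y : Euc d | y - x ∈ W t₀} ⊆ A t₀ ∪ {y | y - x ∈ V} := by
        intro y hy
        by_cases h : y - x ∈ V
        · exact Or.inr h
        · exact Or.inl ⟨hy, h⟩
      refine le_antisymm ?_ (by simp)
      calc ρ {y | y - x ∈ W t₀} ≤ ρ (A t₀ ∪ {y | y - x ∈ V}) := measure_mono hsub
        _ ≤ ρ (A t₀) + ρ {y | y - x ∈ V} := measure_union_le _ _
        _ = 0 := by rw [hA0, hVnull]; simp

lemma exists_null_hyperplane {d : ℕ} (hd : 1 ≤ d) (ρ : Measure (Euc d)) [IsFiniteMeasure ρ]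
    (hatom : ∀ y, ρ {y} = 0) (x : Euc d) :
    ∃ u : Euc d, ‖u‖ = 1 ∧ ρ {y | ⟪y, u⟫ = ⟪x, u⟫} = 0 := by
  obtain ⟨V, hVr, hVnull⟩ := exists_null_flat ρ x (hatom x) (d - 1) (by omega)
  have hrE : Module.finrank ℝ (Euc d) = d := finrank_euclideanSpace_fin
  have horth : Module.finrank ℝ Vᗮ = 1 := by
    have := V.finrank_add_finrank_orthogonal
    omega
  set b := stdOrthonormalBasis ℝ (Vᗮ : Submodule ℝ (Euc d))
  set u : Euc d := ↑(b ⟨0, by omega⟩)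
  have huV : u ∈ Vᗮ := (b ⟨0, by omega⟩).2
  have hun : ‖u‖ = 1 := (Submodule.norm_coe _).trans (b.orthonormal.1 ⟨0, by omega⟩)
  have hu0 : u ≠ 0 := by
    intro h; rw [h] at hun; simp at hun
  have hspan : Submodule.span ℝ {u} = Vᗮ := by
    apply Submodule.eq_of_le_of_finrank_eq
    · rw [Submodule.span_le, Set.singleton_subset_iff]; exact huV
    · rw [finrank_span_singleton hu0, horth]
  have hset : {y : Euc d | ⟪y, u⟫ = ⟪x, u⟫} = {y | y - x ∈ V} := by
    ext y
    simp only [Set.mem_setOf_eq]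
    rw [← sub_eq_zero, ← inner_sub_left]
    constructor
    · intro h
      have : y - x ∈ (Submodule.span ℝ {u})ᗮ := by
        rw [Submodule.mem_orthogonal_singleton_iff_inner_left]
        exact h
      rw [hspan, Submodule.orthogonal_orthogonal] at this
      exact this
    · intro h
      exact (Submodule.mem_orthogonal V u).mp huV _ h
  exact ⟨u, hun, by rw [hset]; exact hVnull⟩

/-- Lemma S3.1 of the paper ('depth bounded'): for nonatomic probability measures `Q`
and `μ` on `ℝ^d` and any `x`, there is a closed halfspace `H` whose boundary hyperplane
contains `x` with `Q(H) = 0` or `Q(H) ≤ μ(H)`; equivalently `Q(H)/μ(H) ≤ 1` under the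
conventions `0/0 = 0`, `a/0 = ∞`.  In particular `D(x|Q,μ) ≤ 1`. -/
theorem exists_halfspace_ratio_le_one
    (d : ℕ) (hd : 1 ≤ d)
    (Q μ : Measure (Euc d)) [IsProbabilityMeasure Q] [IsProbabilityMeasure μ]
    (hQatom : ∀ x, Q {x} = 0) (hμatom : ∀ x, μ {x} = 0) :
    ∀ x : Euc d,
      (∃ u : Euc d, ‖u‖ = 1 ∧
        (Q (halfSpace u x) = 0 ∨ Q (halfSpace u x) ≤ μ (halfSpace u x)) ∧
        Q (halfSpace u x) / μ (halfSpace u x) ≤ 1) ∧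
      pointDepth Q μ x ≤ 1 := by
  intro x
  have hatom : ∀ y, (Q + μ) {y} = 0 := by
    intro y; simp [Measure.add_apply, hQatom y, hμatom y]
  obtain ⟨u, hun, hP⟩ := exists_null_hyperplane hd (Q + μ) hatom x
  set P : Set (Euc d) := {y | ⟪y, u⟫ = ⟪x, u⟫}
  have hQP : Q P = 0 := by
    have : Q P ≤ (Q + μ) P := Measure.le_iff'.mp (Measure.le_add_right le_rfl) P
    exact le_antisymm (hP ▸ this) (by simp)
  have hμP : μ P = 0 := by
    have : μ P ≤ (Q + μ) P := Measure.le_iff'.mp (Measure.le_add_left le_rfl) P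
    exact le_antisymm (hP ▸ this) (by simp)
  have hunion : halfSpace u x ∪ halfSpace (-u) x = Set.univ := by
    ext y
    simp only [Set.mem_union, Set.mem_univ, iff_true, halfSpace, Set.mem_setOf_eq,
      inner_neg_right]
    rcases le_total ⟪x, u⟫ ⟪y, u⟫ with h | h
    · exact Or.inl h
    · exact Or.inr (by linarith)
  have hinter : halfSpace u x ∩ halfSpace (-u) x = P := by
    ext y
    simp only [Set.mem_inter_iff, halfSpace, Set.mem_setOf_eq, inner_neg_right, P]
    constructor
    · rintro ⟨h1, h2⟩; linarith
    · intro h; constructor <;> [skip; skip] <;> linarith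
  have hsum : ∀ (m : Measure (Euc d)), IsProbabilityMeasure m → m P = 0 →
      m (halfSpace u x) + m (halfSpace (-u) x) = 1 := by
    intro m hm hmP
    have := measure_union_add_inter (μ := m) (halfSpace u x) (measurableSet_halfSpace (-u) x)
    rw [hunion, hinter, hmP, measure_univ, add_zero] at this
    exact this.symm
  have hQsum := hsum Q inferInstance hQP
  have hμsum := hsum μ inferInstance hμP
  have hkey : Q (halfSpace u x) ≤ μ (halfSpace u x) ∨
      Q (halfSpace (-u) x) ≤ μ (halfSpace (-u) x) := by
    by_contra h
    push_neg at h
    obtain ⟨h1, h2⟩ := h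
    have : (1 : ℝ≥0∞) < 1 := by
      calc (1 : ℝ≥0∞) = μ (halfSpace u x) + μ (halfSpace (-u) x) := hμsum.symm
        _ < Q (halfSpace u x) + Q (halfSpace (-u) x) := ENNReal.add_lt_add h1 h2
        _ = 1 := hQsum
    exact lt_irrefl _ this
  have hfin : ∀ u' : Euc d, ‖u'‖ = 1 → Q (halfSpace u' x) ≤ μ (halfSpace u' x) →
      (∃ u : Euc d, ‖u‖ = 1 ∧
        (Q (halfSpace u x) = 0 ∨ Q (halfSpace u x) ≤ μ (halfSpace u x)) ∧
        Q (halfSpace u x) / μ (halfSpace u x) ≤ 1) ∧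
      pointDepth Q μ x ≤ 1 := by
    intro u' hu' hle
    have hdiv : Q (halfSpace u' x) / μ (halfSpace u' x) ≤ 1 := by
      apply ENNReal.div_le_of_le_mul
      rw [one_mul]; exact hle
    refine ⟨⟨u', hu', Or.inr hle, hdiv⟩, ?_⟩
    exact le_trans (iInf₂_le u' hu') hdiv
  rcases hkey with h | h
  · exact hfin u hun h
  · exact hfin (-u) (by rw [norm_neg]; exact hun) h
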